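/- For every integer l > 1, the cuspidal subspace S₄(l) is spanned by the classes of the symbols xy(u,v): each class xy(u,v) with gcd(u,v,l) = 1 lies in S₄(l), and every element of S₄(l) is a ℂ-linear combination of the classes xy(u,v) over pairs (u,v) ∈ (ℤ/lℤ)² with gcd(u,v,l) = 1. -/

import Mathlib

open scoped BigOperators

namespace MW

variable (l : ℕ)

/-- Index type for the basis symbols: `0 ↦ x²`, `1 ↦ xy`, `2 ↦ y²`. -/
abbrev Sym := Fin 3 × ZMod l × ZMod l

/-- The free ℂ-vector space on the symbols. -/
abbrev V := Sym l →₀ ℂ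

/-- `gcd(u,v,l) = 1`. -/
def copr (u v : ZMod l) : Prop := Nat.gcd (Nat.gcd (ZMod.val u) (ZMod.val v)) l = 1

instance (u v : ZMod l) : Decidable (copr l u v) := by unfold copr; infer_instance

noncomputable def X2 (u v : ZMod l) : V l := Finsupp.single (0, u, v) 1
noncomputable def XY (u v : ZMod l) : V l := Finsupp.single (1, u, v) 1
noncomputable def Y2 (u v : ZMod l) : V l := Finsupp.single (2, u, v) 1

/-- The relation subspace: the relations of Merel–Shokurov on coprime symbols,
together with the (dummy) basis vectors at non-coprime indices. -/
noncomputable def Rel : Submodule ℂ (V l) :=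
  Submodule.span ℂ
    ({ w | ∃ u v, ¬ copr l u v ∧ (w = X2 l u v ∨ w = XY l u v ∨ w = Y2 l u v) } ∪
     { w | ∃ u v, copr l u v ∧
        (w = X2 l u v + Y2 l v (-u) ∨
         w = XY l u v - XY l v (-u) ∨
         w = Y2 l u v + X2 l v (-u) ∨
         w = XY l v (-u - v) - XY l (-u - v) u + Y2 l (-u - v) u + X2 l u v - XY l u v) })

/-- The space of weight four modular symbols of level `l`. -/
abbrev M := V l ⧸ Rel l

noncomputable def x2 (u v : ZMod l) : M l := Submodule.Quotient.mk (X2 l u v)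
noncomputable def xy (u v : ZMod l) : M l := Submodule.Quotient.mk (XY l u v)
noncomputable def y2 (u v : ZMod l) : M l := Submodule.Quotient.mk (Y2 l u v)

/-- The class of `p₂·x²(u,v) + p₁·xy(u,v) + p₀·y²(u,v)` in `M l`. -/
noncomputable def pcl (p2 p1 p0 : ℂ) (u v : ZMod l) : M l :=
  p2 • x2 l u v + p1 • xy l u v + p0 • y2 l u v

/-- Reduction `ZMod l → ZMod (gcd(a,l))`. -/
noncomputable def castg (a : ZMod l) : ZMod l →+* ZMod (Nat.gcd (ZMod.val a) l) :=
  ZMod.castHom (Nat.gcd_dvd_right (ZMod.val a) l) (ZMod (Nat.gcd (ZMod.val a) l))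

/-- The functional on `V l` attached to the cusp data `(a, b)`. -/
noncomputable def psiV (a : ZMod l) (b : ZMod (Nat.gcd (ZMod.val a) l)) : V l →ₗ[ℂ] ℂ :=
  Finsupp.lift ℂ ℂ (Sym l) fun p =>
    if copr l p.2.1 p.2.2 then
      (if p.1 = 0 then
        ((if p.2.1 = a ∧ castg l a p.2.2 = b then (1 : ℂ) else 0) +
         (if p.2.1 = -a ∧ castg l a p.2.2 = -b then (1 : ℂ) else 0))
       else if p.1 = 2 then
        (-(if p.2.2 = a ∧ castg l a p.2.1 = -b then (1 : ℂ) else 0) -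
          (if p.2.2 = -a ∧ castg l a p.2.1 = b then (1 : ℂ) else 0))
       else 0)
    else 0

/-- The cuspidal subspace `S₄(l) ⊆ M₄(l)`: the (image in `M l` of the) intersection
of the kernels of all the functionals `ψ_{(a,b)}`. -/
noncomputable def S : Submodule ℂ (M l) :=
  Submodule.map (Rel l).mkQ
    (⨅ (a : ZMod l), ⨅ (b : ZMod (Nat.gcd (ZMod.val a) l)), ⨅ (_ : IsUnit b),
      LinearMap.ker (psiV l a b))


variable {l}


lemma copr_iff_bezout [NeZero l] {u v : ZMod l} :
    copr l u v ↔ ∃ a b : ZMod l, a * u + b * v = 1 := by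
  constructor
  · intro h
    have h1 : IsCoprime ((Nat.gcd u.val v.val : ℤ)) (l : ℤ) := by
      rw [Int.isCoprime_iff_gcd_eq_one]
      exact_mod_cast h
    obtain ⟨x, y, hxy⟩ := h1
    have hg : (Nat.gcd u.val v.val : ℤ) = u.val * Nat.gcdA u.val v.val + v.val * Nat.gcdB u.val v.val :=
      Nat.gcd_eq_gcd_ab u.val v.val
    refine ⟨(x * Nat.gcdA u.val v.val : ℤ), (x * Nat.gcdB u.val v.val : ℤ), ?_⟩
    have := congrArg (fun t : ℤ => (t : ZMod l)) hxy
    rw [hg] at this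
    push_cast at this
    rw [ZMod.natCast_val, ZMod.natCast_val, ZMod.cast_id, ZMod.cast_id, ZMod.natCast_self] at this
    push_cast
    linear_combination this
  · rintro ⟨a, b, hab⟩
    set d := Nat.gcd (Nat.gcd u.val v.val) l with hd
    have hdl : d ∣ l := Nat.gcd_dvd_right _ _
    have hdu : d ∣ u.val := (Nat.gcd_dvd_left _ _).trans (Nat.gcd_dvd_left _ _)
    have hdv : d ∣ v.val := (Nat.gcd_dvd_left _ _).trans (Nat.gcd_dvd_right _ _)
    by_contra hne
    have hd0 : d ≠ 0 := fun h => NeZero.ne l (Nat.eq_zero_of_zero_dvd (h ▸ hdl))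
    have hd1' : d ≠ 1 := fun h => hne h
    haveI : NeZero d := ⟨hd0⟩
    haveI : Fact (1 < d) := ⟨by omega⟩
    have := congrArg (ZMod.castHom hdl (ZMod d)) hab
    rw [map_add, map_mul, map_mul, map_one] at this
    have hu0 : (ZMod.castHom hdl (ZMod d)) u = 0 := by
      rw [ZMod.castHom_apply, ← ZMod.natCast_val]
      exact (ZMod.natCast_eq_zero_iff _ _).mpr hdu
    have hv0 : (ZMod.castHom hdl (ZMod d)) v = 0 := by
      rw [ZMod.castHom_apply, ← ZMod.natCast_val]
      exact (ZMod.natCast_eq_zero_iff _ _).mpr hdv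
    rw [hu0, hv0, mul_zero, mul_zero, add_zero] at this
    exact one_ne_zero (α := ZMod d) this.symm
  
lemma castg_apply [NeZero l] (u v : ZMod l) :
    castg l u v = ((v.val : ℕ) : ZMod (Nat.gcd u.val l)) := by
  rw [castg, ZMod.castHom_apply, ZMod.natCast_val]

lemma copr_iff_isUnit [NeZero l] {u v : ZMod l} :
    copr l u v ↔ IsUnit (castg l u v) := by
  rw [castg_apply, ZMod.isUnit_iff_coprime, copr, Nat.Coprime]
  rw [Nat.gcd_comm u.val v.val, Nat.gcd_assoc]


lemma copr_neg_left [NeZero l] {u v : ZMod l} (h : copr l u v) : copr l (-u) v := by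
  rw [copr_iff_bezout] at h ⊢
  obtain ⟨a, b, hab⟩ := h
  exact ⟨-a, b, by ring_nf; ring_nf at hab; linear_combination hab⟩

lemma copr_neg_right [NeZero l] {u v : ZMod l} (h : copr l u v) : copr l u (-v) := by
  rw [copr_iff_bezout] at h ⊢
  obtain ⟨a, b, hab⟩ := h
  exact ⟨a, -b, by linear_combination hab⟩

lemma copr_swap [NeZero l] {u v : ZMod l} (h : copr l u v) : copr l v u := by
  rw [copr_iff_bezout] at h ⊢
  obtain ⟨a, b, hab⟩ := h
  exact ⟨b, a, by linear_combination hab⟩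

lemma copr_add [NeZero l] {u v : ZMod l} (h : copr l u v) : copr l u (v + u) := by
  rw [copr_iff_bezout] at h ⊢
  obtain ⟨a, b, hab⟩ := h
  exact ⟨a - b, b, by linear_combination hab⟩

lemma copr_mul_add [NeZero l] {u v : ZMod l} (c : ZMod l) (h : copr l u v) :
    copr l u (v + c * u) := by
  rw [copr_iff_bezout] at h ⊢
  obtain ⟨a, b, hab⟩ := h
  exact ⟨a - b * c, b, by linear_combination hab⟩

lemma rel_gen1 {u v : ZMod l} (h : copr l u v) : X2 l u v + Y2 l v (-u) ∈ Rel l :=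
  Submodule.subset_span (Or.inr ⟨u, v, h, Or.inl rfl⟩)

lemma rel_gen3 {u v : ZMod l} (h : copr l u v) : Y2 l u v + X2 l v (-u) ∈ Rel l :=
  Submodule.subset_span (Or.inr ⟨u, v, h, Or.inr (Or.inr (Or.inl rfl))⟩)

lemma rel_gen4 {u v : ZMod l} (h : copr l u v) :
    XY l v (-u - v) - XY l (-u - v) u + Y2 l (-u - v) u + X2 l u v - XY l u v ∈ Rel l :=
  Submodule.subset_span (Or.inr ⟨u, v, h, Or.inr (Or.inr (Or.inr rfl))⟩)

lemma rel_genNC_X2 {u v : ZMod l} (h : ¬ copr l u v) : X2 l u v ∈ Rel l :=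
  Submodule.subset_span (Or.inl ⟨u, v, h, Or.inl rfl⟩)

lemma rel_genNC_XY {u v : ZMod l} (h : ¬ copr l u v) : XY l u v ∈ Rel l :=
  Submodule.subset_span (Or.inl ⟨u, v, h, Or.inr (Or.inl rfl)⟩)

lemma rel_genNC_Y2 {u v : ZMod l} (h : ¬ copr l u v) : Y2 l u v ∈ Rel l :=
  Submodule.subset_span (Or.inl ⟨u, v, h, Or.inr (Or.inr rfl)⟩)

variable (l) in
/-- `Rel` together with the span of all `XY` symbols. -/
noncomputable def T : Submodule ℂ (V l) :=
  Rel l ⊔ Submodule.span ℂ {w | ∃ u v : ZMod l, w = XY l u v}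

lemma rel_le_T : Rel l ≤ T l := le_sup_left

lemma XY_mem_T (u v : ZMod l) : XY l u v ∈ T l :=
  le_sup_right (a := Rel l) (Submodule.subset_span ⟨u, v, rfl⟩)

lemma mkT_XY (u v : ZMod l) : (T l).mkQ (XY l u v) = 0 := by
  rw [Submodule.mkQ_apply, Submodule.Quotient.mk_eq_zero]
  exact XY_mem_T u v

lemma mkT_Y2 {u v : ZMod l} (h : copr l u v) :
    (T l).mkQ (Y2 l u v) = - (T l).mkQ (X2 l v (-u)) := by
  have := rel_le_T (rel_gen3 h)
  rw [← Submodule.Quotient.mk_eq_zero (p := T l)] at this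
  rw [Submodule.Quotient.mk_add] at this
  simp only [Submodule.mkQ_apply]
  exact eq_neg_of_add_eq_zero_left this

lemma mkT_sgn [NeZero l] {u v : ZMod l} (h : copr l u v) :
    (T l).mkQ (X2 l (-u) (-v)) = (T l).mkQ (X2 l u v) := by
  have h1 := rel_le_T (rel_gen1 h)
  have h3 := rel_le_T (rel_gen3 (copr_neg_right (copr_swap h)))
  have : X2 l u v - X2 l (-u) (-v) ∈ T l := by
    have e0 : X2 l u v - X2 l (-u) (-v)
        = (X2 l u v + Y2 l v (-u)) - (Y2 l v (-u) + X2 l (-u) (-v)) := by abel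
    rw [e0]
    exact Submodule.sub_mem _ h1 h3
  rw [← sub_eq_zero, ← map_sub, Submodule.mkQ_apply, Submodule.Quotient.mk_eq_zero]
  have e : X2 l (-u) (-v) - X2 l u v = -(X2 l u v - X2 l (-u) (-v)) := by abel
  rw [e]
  exact Submodule.neg_mem _ this

lemma copr_nuv [NeZero l] {u v : ZMod l} (h : copr l u v) : copr l (-u - v) u := by
  rw [copr_iff_bezout] at h ⊢
  obtain ⟨a, b, hab⟩ := h
  exact ⟨-b, a - b, by linear_combination hab⟩

lemma mkT_step [NeZero l] {u v : ZMod l} (h : copr l u v) :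
    (T l).mkQ (X2 l u (v + u)) = (T l).mkQ (X2 l u v) := by
  have h4 := rel_le_T (rel_gen4 h)
  have h3 := rel_le_T (rel_gen3 (copr_nuv h))
  have hx : X2 l u v - X2 l u (v + u)
      = (XY l v (-u - v) - XY l (-u - v) u + Y2 l (-u - v) u + X2 l u v - XY l u v)
        - (Y2 l (-u - v) u + X2 l u (-(-u - v)))
        - XY l v (-u - v) + XY l (-u - v) u + XY l u v := by
    have : -(-u - v) = v + u := by ring
    rw [this]; abel
  have : X2 l u v - X2 l u (v + u) ∈ T l := by
    rw [hx]
    exact Submodule.add_mem _ (Submodule.add_mem _ (Submodule.sub_mem _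
      (Submodule.sub_mem _ h4 h3) (XY_mem_T _ _)) (XY_mem_T _ _)) (XY_mem_T _ _)
  rw [← sub_eq_zero, ← map_sub, Submodule.mkQ_apply, Submodule.Quotient.mk_eq_zero]
  have e : X2 l u (v + u) - X2 l u v = -(X2 l u v - X2 l u (v + u)) := by abel
  rw [e]
  exact Submodule.neg_mem _ this

lemma mkT_nsmul [NeZero l] {u v : ZMod l} (h : copr l u v) (k : ℕ) :
    (T l).mkQ (X2 l u (v + k • u)) = (T l).mkQ (X2 l u v) := by
  induction k with
  | zero => simp
  | succ n ih =>
    have hc : copr l u (v + n • u) := by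
      have := copr_mul_add (n : ZMod l) h
      rwa [← nsmul_eq_mul] at this
    have := mkT_step hc
    rw [succ_nsmul, ← add_assoc]
    rw [this, ih]

lemma mkT_inv [NeZero l] {u v v' : ZMod l} (h : copr l u v) (h' : copr l u v')
    (hc : castg l u v = castg l u v') :
    (T l).mkQ (X2 l u v) = (T l).mkQ (X2 l u v') := by
  set d := Nat.gcd u.val l with hd
  haveI : NeZero d := ⟨Nat.gcd_ne_zero_right (NeZero.ne l)⟩
  have hdvd : (d : ℕ) ∣ (v' - v).val := by
    have : castg l u (v' - v) = 0 := by rw [map_sub, hc, sub_self]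
    rw [castg_apply] at this
    exact (ZMod.natCast_eq_zero_iff _ _).mp this
  obtain ⟨m, hm⟩ := hdvd
  -- express (d : ZMod l) as a multiple of u
  have hbez : (d : ℤ) = u.val * Nat.gcdA u.val l + l * Nat.gcdB u.val l :=
    Nat.gcd_eq_gcd_ab u.val l
  have hdz : (d : ZMod l) = ((Nat.gcdA u.val l : ℤ) : ZMod l) * u := by
    have := congrArg (fun t : ℤ => (t : ZMod l)) hbez
    push_cast at this
    rw [ZMod.natCast_val, ZMod.cast_id, ZMod.natCast_self] at this
    rw [this]; ring
  have hv' : v' = v + ((m : ZMod l) * ((Nat.gcdA u.val l : ℤ) : ZMod l)) * u := by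
    have h1 : v' - v = ((v' - v).val : ZMod l) := (ZMod.natCast_zmod_val _).symm
    rw [hm] at h1
    push_cast at h1
    rw [hdz] at h1
    linear_combination h1
  set c := (m : ZMod l) * ((Nat.gcdA u.val l : ℤ) : ZMod l) with hcdef
  have hcval : c * u = c.val • u := by
    rw [nsmul_eq_mul, ZMod.natCast_zmod_val]
  rw [hv', hcval]
  exact (mkT_nsmul h c.val).symm

lemma lift_single {M : Type} [AddCommMonoid M] [Module ℂ M] (f : Sym l → M) (p : Sym l) (c : ℂ) :
    Finsupp.lift M ℂ (Sym l) f (Finsupp.single p c) = c • f p := by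
  rw [Finsupp.lift_apply]
  exact Finsupp.sum_single_index (zero_smul _ _)

variable (l) in
/-- Boundary values on basis symbols. -/
noncomputable def Bd (p : Sym l) : (ZMod l × ℕ) →₀ ℂ :=
  if copr l p.2.1 p.2.2 then
    if p.1 = 0 then
      Finsupp.single (p.2.1, (castg l p.2.1 p.2.2).val) 1
        + Finsupp.single (-p.2.1, (castg l (-p.2.1) (-p.2.2)).val) 1
    else if p.1 = 2 then
      - Finsupp.single (p.2.2, (castg l p.2.2 (-p.2.1)).val) 1
        - Finsupp.single (-p.2.2, (castg l (-p.2.2) p.2.1).val) 1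
    else 0
  else 0

variable (l) in
/-- The total boundary map. -/
noncomputable def B : V l →ₗ[ℂ] ((ZMod l × ℕ) →₀ ℂ) :=
  Finsupp.lift _ ℂ (Sym l) (Bd l)

lemma val_eq_iff {d : ℕ} [NeZero d] (x y : ZMod d) : x.val = y.val ↔ x = y :=
  ⟨fun h => ZMod.val_injective d h, fun h => congrArg _ h⟩

lemma iff_x2_1 [NeZero l] (a u v : ZMod l) (b : ZMod (Nat.gcd a.val l)) :
    (u = a ∧ (castg l u v).val = b.val) ↔ (u = a ∧ castg l a v = b) := by
  haveI : NeZero (Nat.gcd a.val l) := ⟨Nat.gcd_ne_zero_right (NeZero.ne l)⟩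
  constructor
  · rintro ⟨rfl, h⟩; exact ⟨rfl, (val_eq_iff _ _).mp h⟩
  · rintro ⟨rfl, h⟩; exact ⟨rfl, (val_eq_iff _ _).mpr h⟩

lemma iff_x2_2 [NeZero l] (a u v : ZMod l) (b : ZMod (Nat.gcd a.val l)) :
    (-u = a ∧ (castg l (-u) (-v)).val = b.val) ↔ (u = -a ∧ castg l a v = -b) := by
  constructor
  · rintro ⟨rfl, h⟩
    haveI : NeZero (Nat.gcd (-u).val l) := ⟨Nat.gcd_ne_zero_right (NeZero.ne l)⟩
    rw [map_neg, val_eq_iff] at h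
    refine ⟨(neg_neg u).symm, ?_⟩
    rw [← h, neg_neg]
  · rintro ⟨rfl, h⟩
    haveI : NeZero (Nat.gcd a.val l) := ⟨Nat.gcd_ne_zero_right (NeZero.ne l)⟩
    refine ⟨neg_neg a, ?_⟩
    have e : (-(-a)) = a := neg_neg a
    rw [e, map_neg, h, neg_neg]

lemma iff_y2_1 [NeZero l] (a u v : ZMod l) (b : ZMod (Nat.gcd a.val l)) :
    (v = a ∧ (castg l v (-u)).val = b.val) ↔ (v = a ∧ castg l a u = -b) := by
  haveI : NeZero (Nat.gcd a.val l) := ⟨Nat.gcd_ne_zero_right (NeZero.ne l)⟩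
  constructor
  · rintro ⟨rfl, h⟩
    rw [map_neg, val_eq_iff, neg_eq_iff_eq_neg] at h
    exact ⟨rfl, h⟩
  · rintro ⟨rfl, h⟩
    rw [map_neg, val_eq_iff, neg_eq_iff_eq_neg]
    exact ⟨rfl, h⟩

lemma iff_y2_2 [NeZero l] (a u v : ZMod l) (b : ZMod (Nat.gcd a.val l)) :
    (-v = a ∧ (castg l (-v) u).val = b.val) ↔ (v = -a ∧ castg l a u = b) := by
  constructor
  · rintro ⟨rfl, h⟩
    haveI : NeZero (Nat.gcd (-v).val l) := ⟨Nat.gcd_ne_zero_right (NeZero.ne l)⟩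
    rw [val_eq_iff] at h
    exact ⟨(neg_neg v).symm, h⟩
  · rintro ⟨rfl, h⟩
    haveI : NeZero (Nat.gcd a.val l) := ⟨Nat.gcd_ne_zero_right (NeZero.ne l)⟩
    refine ⟨neg_neg a, ?_⟩
    have e : (-(-a)) = a := neg_neg a
    rw [e, h]

/-- `ψ_{(a,b)}` is evaluation of the boundary at `(a, b.val)`. -/
lemma lapply_B_eq_psi [NeZero l] (a : ZMod l) (b : ZMod (Nat.gcd a.val l)) :
    (Finsupp.lapply (a, b.val) : ((ZMod l × ℕ) →₀ ℂ) →ₗ[ℂ] ℂ).comp (B l) = psiV l a b := by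
  apply Finsupp.lhom_ext
  rintro ⟨i, u, v⟩ c
  rw [LinearMap.comp_apply]
  rw [show (B l) (Finsupp.single (i,u,v) c) = c • Bd l (i,u,v) from lift_single _ _ _]
  rw [show (psiV l a b) (Finsupp.single (i,u,v) c) = c • _ from lift_single _ _ _]
  rw [map_smul]
  congr 1
  show (Bd l (i,u,v)) (a, b.val) = _
  have hi : i = 0 ∨ i = 1 ∨ i = 2 := by
    rcases i with ⟨iv, hiv⟩
    interval_cases iv
    · exact Or.inl rfl
    · exact Or.inr (Or.inl rfl)
    · exact Or.inr (Or.inr rfl)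
  by_cases hco : copr l u v
  · simp only [Bd, hco, if_true]
    rcases hi with rfl | rfl | rfl
    · rw [if_pos rfl]
      rw [Finsupp.add_apply, Finsupp.single_apply, Finsupp.single_apply]
      rw [if_congr ((Prod.mk.injEq _ _ _ _).to_iff.trans (iff_x2_1 a u v b)) rfl rfl,
          if_congr ((Prod.mk.injEq _ _ _ _).to_iff.trans (iff_x2_2 a u v b)) rfl rfl]
      rw [if_pos rfl]
    · rw [if_neg (by decide), if_neg (by decide)]
      rfl
    · rw [if_neg (by decide), if_pos rfl]
      rw [Finsupp.sub_apply, Finsupp.neg_apply, Finsupp.single_apply, Finsupp.single_apply]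
      rw [if_congr ((Prod.mk.injEq _ _ _ _).to_iff.trans (iff_y2_1 a u v b)) rfl rfl,
          if_congr ((Prod.mk.injEq _ _ _ _).to_iff.trans (iff_y2_2 a u v b)) rfl rfl]
      rw [if_neg (show ¬((2:Fin 3) = 0) by decide), if_pos rfl]
  · simp only [Bd, hco, if_false]
    rfl

lemma val_lt_gcd [NeZero l] (u v : ZMod l) :
    (castg l u v).val < Nat.gcd u.val l := by
  haveI : NeZero (Nat.gcd u.val l) := ⟨Nat.gcd_ne_zero_right (NeZero.ne l)⟩
  exact ZMod.val_lt _

/-- `ψ_{(a,b)}` vanishes when `b` is not a unit. -/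
lemma psiV_nonunit [NeZero l] (a : ZMod l) (b : ZMod (Nat.gcd a.val l))
    (hb : ¬ IsUnit b) : psiV l a b = 0 := by
  apply Finsupp.lhom_ext
  rintro ⟨i, u, v⟩ c
  rw [show (psiV l a b) (Finsupp.single (i,u,v) c) = c • _ from lift_single _ _ _]
  rw [LinearMap.zero_apply, smul_eq_mul]
  convert mul_zero c using 2
  by_cases hco : copr l u v
  · rw [if_pos hco]
    have h1 : ¬ (u = a ∧ castg l a v = b) := by
      rintro ⟨rfl, h⟩
      exact hb (h ▸ (copr_iff_isUnit.mp hco))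
    have h2 : ¬ (u = -a ∧ castg l a v = -b) := by
      rintro ⟨hu, h⟩
      have hcu : copr l (-a) v := hu ▸ hco
      have : IsUnit (castg l a v) := by
        have := copr_iff_isUnit.mp (copr_neg_left hcu)
        have e : (- -a) = a := neg_neg a
        rwa [e] at this
      rw [h] at this
      exact hb ((IsUnit.neg_iff _).mp this)
    have h3 : ¬ (v = a ∧ castg l a u = -b) := by
      rintro ⟨rfl, h⟩
      have := copr_iff_isUnit.mp (copr_swap hco)
      rw [h] at this
      exact hb ((IsUnit.neg_iff _).mp this)
    have h4 : ¬ (v = -a ∧ castg l a u = b) := by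
      rintro ⟨hv, h⟩
      have hcu : copr l u (-a) := hv ▸ hco
      have : IsUnit (castg l a u) := by
        have := copr_iff_isUnit.mp (copr_neg_left (copr_swap hcu))
        have e : (- -a) = a := neg_neg a
        rwa [e] at this
      exact hb (h ▸ this)
    rw [if_neg h1, if_neg h2, if_neg h3, if_neg h4]
    split_ifs <;> norm_num
  · rw [if_neg hco]

/-- boundary coordinates beyond the gcd vanish. -/
lemma lapply_B_ge [NeZero l] (a : ZMod l) (n : ℕ) (hn : Nat.gcd a.val l ≤ n) :
    (Finsupp.lapply (a, n) : ((ZMod l × ℕ) →₀ ℂ) →ₗ[ℂ] ℂ).comp (B l) = 0 := by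
  apply Finsupp.lhom_ext
  rintro ⟨i, u, v⟩ c
  rw [LinearMap.comp_apply,
    show (B l) (Finsupp.single (i,u,v) c) = c • Bd l (i,u,v) from lift_single _ _ _,
    map_smul, LinearMap.zero_apply]
  convert smul_zero c using 2
  show (Bd l (i,u,v)) (a, n) = 0
  have key : ∀ (x y : ZMod l), (Finsupp.single (x, (castg l x y).val) (1:ℂ)) (a, n) = 0 := by
    intro x y
    rw [Finsupp.single_apply, if_neg]
    rintro h
    obtain ⟨h1, h2⟩ := Prod.ext_iff.mp h
    simp only at h1 h2
    subst h1
    exact absurd h2 (Nat.ne_of_lt (lt_of_lt_of_le (val_lt_gcd _ _) hn))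
  by_cases hco : copr l u v
  · simp only [Bd, hco, if_true]
    rcases (show i = 0 ∨ i = 1 ∨ i = 2 by
      rcases i with ⟨iv, hiv⟩
      interval_cases iv
      · exact Or.inl rfl
      · exact Or.inr (Or.inl rfl)
      · exact Or.inr (Or.inr rfl)) with rfl | rfl | rfl
    · rw [if_pos rfl, Finsupp.add_apply, key, key, add_zero]
    · rw [if_neg (by decide), if_neg (by decide)]; rfl
    · rw [if_neg (by decide), if_pos rfl, Finsupp.sub_apply, Finsupp.neg_apply, key, key,
        neg_zero, sub_zero]
  · simp only [Bd, hco, if_false]; rfl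

lemma B_eq_zero [NeZero l] {w : V l}
    (hw : ∀ (a : ZMod l) (b : ZMod (Nat.gcd a.val l)), IsUnit b → psiV l a b w = 0) :
    B l w = 0 := by
  ext q
  obtain ⟨a, n⟩ := q
  rw [Finsupp.zero_apply]
  by_cases hn : n < Nat.gcd a.val l
  · haveI : NeZero (Nat.gcd a.val l) := ⟨Nat.gcd_ne_zero_right (NeZero.ne l)⟩
    set b : ZMod (Nat.gcd a.val l) := (n : ZMod (Nat.gcd a.val l)) with hbd
    have hbv : b.val = n := ZMod.val_natCast_of_lt hn
    have := congrArg (fun F : V l →ₗ[ℂ] ℂ => F w) (lapply_B_eq_psi a b)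
    simp only [LinearMap.comp_apply, Finsupp.lapply_apply] at this
    rw [hbv] at this
    rw [show ((B l) w) (a, n) = psiV l a b w from this]
    by_cases hb : IsUnit b
    · exact hw a b hb
    · rw [psiV_nonunit a b hb]; rfl
  · have := congrArg (fun F : V l →ₗ[ℂ] ℂ => F w) (lapply_B_ge a n (le_of_not_gt hn))
    simpa only [LinearMap.comp_apply, Finsupp.lapply_apply, LinearMap.zero_apply] using this

lemma lift_single2 {M : Type} [AddCommMonoid M] [Module ℂ M]
    (f : ZMod l × ℕ → M) (p : ZMod l × ℕ) (c : ℂ) :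
    Finsupp.lift M ℂ (ZMod l × ℕ) f (Finsupp.single p c) = c • f p := by
  rw [Finsupp.lift_apply]
  exact Finsupp.sum_single_index (zero_smul _ _)

variable (l) in
/-- Retraction of the boundary map into `V l ⧸ T l`. -/
noncomputable def rmap : ((ZMod l × ℕ) →₀ ℂ) →ₗ[ℂ] (V l ⧸ T l) :=
  Finsupp.lift _ ℂ _ (fun q =>
    if copr l q.1 ((q.2 : ZMod l)) then (2⁻¹ : ℂ) • (T l).mkQ (X2 l q.1 ((q.2 : ZMod l))) else 0)

lemma castg_lift [NeZero l] (u v : ZMod l) :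
    castg l u ((((castg l u v).val : ℕ)) : ZMod l) = castg l u v := by
  haveI : NeZero (Nat.gcd u.val l) := ⟨Nat.gcd_ne_zero_right (NeZero.ne l)⟩
  rw [map_natCast, ZMod.natCast_zmod_val]

lemma copr_lift [NeZero l] {u v : ZMod l} (h : copr l u v) :
    copr l u ((((castg l u v).val : ℕ)) : ZMod l) := by
  rw [copr_iff_isUnit, castg_lift]
  exact copr_iff_isUnit.mp h

lemma rmap_single [NeZero l] {u : ZMod l} {n : ℕ} (h : copr l u ((n : ZMod l))) :
    rmap l (Finsupp.single (u, n) 1) = (2⁻¹ : ℂ) • (T l).mkQ (X2 l u ((n : ZMod l))) := by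
  rw [rmap, lift_single2, one_smul, if_pos h]

lemma rmap_comp_B [NeZero l] : (rmap l).comp (B l) = (T l).mkQ := by
  apply Finsupp.lhom_ext
  rintro ⟨i, u, v⟩ c
  rw [LinearMap.comp_apply,
    show (B l) (Finsupp.single (i,u,v) c) = c • Bd l (i,u,v) from lift_single _ _ _,
    map_smul,
    show (Finsupp.single ((i,u,v) : Sym l) c) = c • Finsupp.single ((i,u,v) : Sym l) (1:ℂ) by
      rw [Finsupp.smul_single, smul_eq_mul, mul_one],
    map_smul]
  congr 1
  have hi : i = 0 ∨ i = 1 ∨ i = 2 := by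
    rcases i with ⟨iv, hiv⟩
    interval_cases iv
    · exact Or.inl rfl
    · exact Or.inr (Or.inl rfl)
    · exact Or.inr (Or.inr rfl)
  by_cases hco : copr l u v
  · simp only [Bd, hco, if_true]
    rcases hi with rfl | rfl | rfl
    · rw [if_pos rfl, map_add]
      have c1 : copr l u (((castg l u v).val : ℕ) : ZMod l) := copr_lift hco
      have hnn : copr l (-u) (-v) := copr_neg_left (copr_neg_right hco)
      have c2 : copr l (-u) (((castg l (-u) (-v)).val : ℕ) : ZMod l) := copr_lift hnn
      rw [rmap_single c1, rmap_single c2]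
      rw [mkT_inv c1 hco (castg_lift u v), mkT_inv c2 hnn (castg_lift (-u) (-v)), mkT_sgn hco]
      show _ = (T l).mkQ (X2 l u v)
      rw [← add_smul]
      norm_num
    · rw [if_neg (by decide), if_neg (by decide), map_zero]
      exact (mkT_XY u v).symm
    · rw [if_neg (by decide), if_pos rfl, map_sub, map_neg]
      have cvu : copr l v (-u) := copr_neg_right (copr_swap hco)
      have cnvu : copr l (-v) u := copr_neg_left (copr_swap hco)
      have c1 : copr l v (((castg l v (-u)).val : ℕ) : ZMod l) := copr_lift cvu
      have c2 : copr l (-v) (((castg l (-v) u).val : ℕ) : ZMod l) := copr_lift cnvu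
      rw [rmap_single c1, rmap_single c2]
      rw [mkT_inv c1 cvu (castg_lift v (-u)), mkT_inv c2 cnvu (castg_lift (-v) u)]
      have e : (T l).mkQ (X2 l (-v) u) = (T l).mkQ (X2 l v (-u)) := by
        have e3 := mkT_sgn cvu
        rwa [neg_neg] at e3
      rw [e]
      show _ = (T l).mkQ (Y2 l u v)
      rw [mkT_Y2 hco]
      generalize (T l).mkQ (X2 l v (-u)) = z
      rw [show -((2:ℂ)⁻¹ • z) - (2:ℂ)⁻¹ • z = (-(2⁻¹) + -(2⁻¹) : ℂ) • z by
        rw [add_smul]; module]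
      norm_num
  · simp only [Bd, hco, if_false, map_zero]
    symm
    rw [Submodule.mkQ_apply, Submodule.Quotient.mk_eq_zero]
    rcases hi with rfl | rfl | rfl
    · exact rel_le_T (rel_genNC_X2 hco)
    · exact rel_le_T (rel_genNC_XY hco)
    · exact rel_le_T (rel_genNC_Y2 hco)

end MW

open MW in
theorem stmt0 (l : ℕ) (hl : 1 < l) :
    (∀ u v : ZMod l, copr l u v → xy l u v ∈ S l) ∧
    (∀ m ∈ S l, m ∈ Submodule.span ℂ {t : M l | ∃ u v : ZMod l, copr l u v ∧ t = xy l u v}) := by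
  haveI : NeZero l := ⟨by omega⟩
  constructor
  · intro u v hco
    refine ⟨XY l u v, ?_, rfl⟩
    simp only [SetLike.mem_coe, Submodule.mem_iInf]
    intro a b hb
    rw [LinearMap.mem_ker]
    rw [show psiV l a b (XY l u v) = _ from lift_single _ _ _]
    rw [one_smul]
    rw [if_pos hco, if_neg (show ¬((1:Fin 3) = 0) by decide),
      if_neg (show ¬((1:Fin 3) = 2) by decide)]
  · rintro m ⟨w, hw, rfl⟩
    simp only [SetLike.mem_coe, Submodule.mem_iInf, LinearMap.mem_ker] at hw
    have hB : B l w = 0 := B_eq_zero hw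
    have hT : w ∈ T l := by
      have h2 := congrArg (fun F : V l →ₗ[ℂ] (V l ⧸ T l) => F w) (rmap_comp_B (l := l))
      simp only [LinearMap.comp_apply] at h2
      rw [hB, map_zero] at h2
      rw [← Submodule.Quotient.mk_eq_zero (p := T l), ← Submodule.mkQ_apply]
      exact h2.symm
    obtain ⟨y, hy, z, hz, rfl⟩ := Submodule.mem_sup.mp hT
    rw [map_add]
    have hy0 : (Rel l).mkQ y = 0 := by
      rw [Submodule.mkQ_apply, Submodule.Quotient.mk_eq_zero]; exact hy
    rw [hy0, zero_add]
    have hmem : (Rel l).mkQ z ∈ Submodule.map (Rel l).mkQ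
        (Submodule.span ℂ {w | ∃ u v : ZMod l, w = XY l u v}) := ⟨z, hz, rfl⟩
    rw [Submodule.map_span] at hmem
    refine Submodule.span_le.mpr ?_ hmem
    rintro t ⟨w', ⟨u, v, rfl⟩, rfl⟩
    by_cases hco : copr l u v
    · exact Submodule.subset_span ⟨u, v, hco, rfl⟩
    · have h0 : (Rel l).mkQ (XY l u v) = 0 := by
        rw [Submodule.mkQ_apply, Submodule.Quotient.mk_eq_zero]
        exact rel_genNC_XY hco
      rw [h0]
      exact Submodule.zero_mem _
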